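/- In the measurement model with system state ρ_S = (1/2)𝟙, memory ρ_M = |0⟩⟨0| ⊗ (1/2)𝟙, system–memory unitary U_SM = (|0⟩⟨0|⊗𝟙₂ + |1⟩⟨1|⊗σ₁)⊗𝟙₂ and measurement operators P̃± = E± ⊗ (1/2)𝟙₂ with E± = ((1−λ±x)/2)𝟙 + λΠ±(Θ,Φ), the normalized post-measurement reduced memory state is ρ′_M = [(1/2)𝟙 + s·Q(Θ,Φ)] ⊗ (1/2)𝟙 where s = xλ/(1+x²+λ²), and its eigenvalues are (1/4)(1+2s) with multiplicity two and (1/4)(1−2s) with multiplicity two, independent of Θ and Φ. -/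
import Mathlib


open Matrix

/-- Pauli matrix σ₁. -/
noncomputable def σ1 : Matrix (Fin 2) (Fin 2) ℂ := !![0, 1; 1, 0]
/-- Pauli matrix σ₂. -/
noncomputable def σ2 : Matrix (Fin 2) (Fin 2) ℂ := !![0, -Complex.I; Complex.I, 0]
/-- Pauli matrix σ₃. -/
noncomputable def σ3 : Matrix (Fin 2) (Fin 2) ℂ := !![1, 0; 0, -1]

/-- The three Pauli matrices, indexed. -/
noncomputable def pauli : Fin 3 → Matrix (Fin 2) (Fin 2) ℂ
  | 0 => σ1
  | 1 => σ2
  | 2 => σ3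

/-- `v · σ = v₁σ₁ + v₂σ₂ + v₃σ₃` for `v ∈ ℝ³`. -/
noncomputable def dotσ (v : Fin 3 → ℝ) : Matrix (Fin 2) (Fin 2) ℂ :=
  ∑ i, (v i : ℂ) • pauli i

/-- Euclidean norm of `v ∈ ℝ³`. -/
noncomputable def enorm3 (v : Fin 3 → ℝ) : ℝ := Real.sqrt (v 0 ^ 2 + v 1 ^ 2 + v 2 ^ 2)

open Kronecker

/-- The dichotomic observable `Q(Θ,Φ)`. -/
noncomputable def Qobs (Θ Φ : ℝ) : Matrix (Fin 2) (Fin 2) ℂ :=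
  !![(Real.cos Θ : ℂ), Complex.exp (Φ * Complex.I) * (Real.sin Θ : ℂ);
     Complex.exp (-Φ * Complex.I) * (Real.sin Θ : ℂ), -(Real.cos Θ : ℂ)]

/-- Biased–unsharp POVM element `E_s = ((1−λ+sx)/2)𝟙 + λΠ_s`, with
`Π_s = (1/2)(𝟙 + s Q(Θ,Φ))` and sign `s = ±1`. -/
noncomputable def Ebu (x l Θ Φ s : ℝ) : Matrix (Fin 2) (Fin 2) ℂ :=
  (((1 - l + s * x)/2 : ℝ) : ℂ) • 1 + (l : ℂ) • ((1/2 : ℂ) • (1 + (s : ℂ) • Qobs Θ Φ))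

/-- `|0⟩⟨0|`. -/
noncomputable def ket0bra0 : Matrix (Fin 2) (Fin 2) ℂ := !![1, 0; 0, 0]
/-- `|1⟩⟨1|`. -/
noncomputable def ket1bra1 : Matrix (Fin 2) (Fin 2) ℂ := !![0, 0; 0, 1]

/-- The system–memory unitary `U_SM = (|0⟩⟨0|⊗𝟙₂ + |1⟩⟨1|⊗σ₁)⊗𝟙₂`. -/
noncomputable def USM : Matrix (Fin 2 × Fin 2 × Fin 2) (Fin 2 × Fin 2 × Fin 2) ℂ :=
  ket0bra0 ⊗ₖ ((1 : Matrix (Fin 2) (Fin 2) ℂ) ⊗ₖ (1 : Matrix (Fin 2) (Fin 2) ℂ))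
    + ket1bra1 ⊗ₖ (σ1 ⊗ₖ (1 : Matrix (Fin 2) (Fin 2) ℂ))

/-- The initial system ⊗ memory state `ρ_S ⊗ ρ_M = (𝟙/2) ⊗ (|0⟩⟨0| ⊗ 𝟙/2)`. -/
noncomputable def rho0 : Matrix (Fin 2 × Fin 2 × Fin 2) (Fin 2 × Fin 2 × Fin 2) ℂ :=
  ((1/2 : ℂ) • (1 : Matrix (Fin 2) (Fin 2) ℂ)) ⊗ₖ
    (ket0bra0 ⊗ₖ ((1/2 : ℂ) • (1 : Matrix (Fin 2) (Fin 2) ℂ)))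

/-- The measurement operator `𝟙 ⊗ P̃_s = 𝟙 ⊗ (E_s ⊗ (1/2)𝟙₂)` on system ⊗ memory. -/
noncomputable def Ptilde (x l Θ Φ s : ℝ) :
    Matrix (Fin 2 × Fin 2 × Fin 2) (Fin 2 × Fin 2 × Fin 2) ℂ :=
  (1 : Matrix (Fin 2) (Fin 2) ℂ) ⊗ₖ
    (Ebu x l Θ Φ s ⊗ₖ ((1/2 : ℂ) • (1 : Matrix (Fin 2) (Fin 2) ℂ)))

/-- The unnormalized post-measurement joint state
`ρ′_SM = Σ_{s=±1} (𝟙⊗P̃_s) U_SM (ρ_S⊗ρ_M) U_SM† (𝟙⊗P̃_s)`. -/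
noncomputable def rhoSM (x l Θ Φ : ℝ) :
    Matrix (Fin 2 × Fin 2 × Fin 2) (Fin 2 × Fin 2 × Fin 2) ℂ :=
  Ptilde x l Θ Φ 1 * (USM * rho0 * USMᴴ) * Ptilde x l Θ Φ 1
    + Ptilde x l Θ Φ (-1) * (USM * rho0 * USMᴴ) * Ptilde x l Θ Φ (-1)

/-- The unnormalized post-measurement reduced memory state (partial trace over the system). -/
noncomputable def rhoMred (x l Θ Φ : ℝ) : Matrix (Fin 2 × Fin 2) (Fin 2 × Fin 2) ℂ :=
  Matrix.of fun m n => ∑ i : Fin 2, rhoSM x l Θ Φ (i, m) (i, n)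

open Matrix Kronecker Complex in
theorem hQ2 (Θ Φ : ℝ) : Qobs Θ Φ * Qobs Θ Φ = 1 := by
  have h1 : Complex.exp (-(↑Φ * Complex.I)) * Complex.exp (↑Φ * Complex.I) = 1 := by
    rw [← Complex.exp_add]; ring_nf; exact Complex.exp_zero
  have h2 : Complex.cos Θ ^ 2 + Complex.sin Θ ^ 2 = 1 := Complex.cos_sq_add_sin_sq Θ
  ext i j
  fin_cases i <;> fin_cases j <;>
    simp [Qobs, Matrix.mul_apply, Fin.sum_univ_two, Matrix.one_apply, neg_mul] <;>
    first
    | linear_combination (Complex.sin Θ:ℂ)^2 * h1 + h2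
    | ring

open Matrix Kronecker in
theorem hE (x l Θ Φ s : ℝ) : Ebu x l Θ Φ s
    = (((1 + s*x)/2 : ℝ):ℂ) • 1 + (((s*l)/2:ℝ):ℂ) • Qobs Θ Φ := by
  unfold Ebu; push_cast; module
open Matrix Kronecker

theorem kronH {m n : Type*} [Fintype m] [Fintype n] [DecidableEq m] [DecidableEq n]
    (A : Matrix m m ℂ) (B : Matrix n n ℂ) : (A ⊗ₖ B)ᴴ = Aᴴ ⊗ₖ Bᴴ := by
  ext ⟨i,j⟩ ⟨k,l⟩
  simp [conjTranspose_apply, star_mul']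

theorem P00 : ket0bra0 * ket0bra0 = ket0bra0 := by
  ext i j <;> fin_cases i <;> fin_cases j <;> simp [ket0bra0, Matrix.mul_apply, Fin.sum_univ_two]
theorem P11 : ket1bra1 * ket1bra1 = ket1bra1 := by
  ext i j <;> fin_cases i <;> fin_cases j <;> simp [ket1bra1, Matrix.mul_apply, Fin.sum_univ_two]
theorem P01 : ket0bra0 * ket1bra1 = 0 := by
  ext i j <;> fin_cases i <;> fin_cases j <;> simp [ket0bra0, ket1bra1, Matrix.mul_apply, Fin.sum_univ_two]
theorem P10 : ket1bra1 * ket0bra0 = 0 := by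
  ext i j <;> fin_cases i <;> fin_cases j <;> simp [ket0bra0, ket1bra1, Matrix.mul_apply, Fin.sum_univ_two]
theorem hP0H : ket0bra0ᴴ = ket0bra0 := by
  ext i j <;> fin_cases i <;> fin_cases j <;> simp [ket0bra0]
theorem hP1H : ket1bra1ᴴ = ket1bra1 := by
  ext i j <;> fin_cases i <;> fin_cases j <;> simp [ket1bra1]
theorem hs1H : σ1ᴴ = σ1 := by
  ext i j <;> fin_cases i <;> fin_cases j <;> simp [σ1]
theorem hsPs : σ1 * ket0bra0 * σ1 = ket1bra1 := by
  ext i j <;> fin_cases i <;> fin_cases j <;> simp [σ1, ket0bra0, ket1bra1, Matrix.mul_apply, Fin.sum_univ_two]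
theorem hPsum : ket0bra0 + ket1bra1 = 1 := by
  ext i j <;> fin_cases i <;> fin_cases j <;> simp [ket0bra0, ket1bra1, Matrix.one_apply]

theorem hU : USM * rho0 * USMᴴ
    = (1/2:ℂ) • (ket0bra0 ⊗ₖ (ket0bra0 ⊗ₖ ((1/2:ℂ)•(1:Matrix (Fin 2) (Fin 2) ℂ))))
    + (1/2:ℂ) • (ket1bra1 ⊗ₖ (ket1bra1 ⊗ₖ ((1/2:ℂ)•(1:Matrix (Fin 2) (Fin 2) ℂ)))) := by
  unfold USM rho0
  simp only [conjTranspose_add, kronH, hP0H, hP1H, hs1H, conjTranspose_one,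
    Matrix.add_mul, Matrix.mul_add, ← Matrix.mul_kronecker_mul,
    Matrix.smul_kronecker, Matrix.kronecker_smul, Matrix.mul_smul, Matrix.smul_mul,
    P00, P11, P01, P10, Matrix.one_mul, Matrix.mul_one,
    Matrix.zero_kronecker, Matrix.kronecker_zero, smul_zero, Matrix.zero_mul,
    Matrix.mul_zero, add_zero, zero_add, smul_smul]
  
  rw [hsPs]
open Matrix Kronecker

theorem hEPE (x l Θ Φ s : ℝ) :
    Ebu x l Θ Φ s * ket0bra0 * Ebu x l Θ Φ s + Ebu x l Θ Φ s * ket1bra1 * Ebu x l Θ Φ s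
      = Ebu x l Θ Φ s * Ebu x l Θ Φ s := by
  rw [Matrix.mul_assoc, Matrix.mul_assoc, ← Matrix.mul_add, ← Matrix.add_mul, hPsum,
    Matrix.one_mul]

theorem hSM (x l Θ Φ : ℝ) : rhoSM x l Θ Φ
    = (1/16:ℂ) • (ket0bra0 ⊗ₖ ((Ebu x l Θ Φ 1 * ket0bra0 * Ebu x l Θ Φ 1) ⊗ₖ (1:Matrix (Fin 2) (Fin 2) ℂ)))
    + (1/16:ℂ) • (ket1bra1 ⊗ₖ ((Ebu x l Θ Φ 1 * ket1bra1 * Ebu x l Θ Φ 1) ⊗ₖ (1:Matrix (Fin 2) (Fin 2) ℂ)))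
    + ((1/16:ℂ) • (ket0bra0 ⊗ₖ ((Ebu x l Θ Φ (-1) * ket0bra0 * Ebu x l Θ Φ (-1)) ⊗ₖ (1:Matrix (Fin 2) (Fin 2) ℂ)))
    + (1/16:ℂ) • (ket1bra1 ⊗ₖ ((Ebu x l Θ Φ (-1) * ket1bra1 * Ebu x l Θ Φ (-1)) ⊗ₖ (1:Matrix (Fin 2) (Fin 2) ℂ)))) := by
  unfold rhoSM Ptilde
  rw [hU]
  simp only [Matrix.add_mul, Matrix.mul_add, ← Matrix.mul_kronecker_mul,
    Matrix.smul_kronecker, Matrix.kronecker_smul, Matrix.mul_smul, Matrix.smul_mul,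
    Matrix.one_mul, Matrix.mul_one, smul_smul, P00, P11, P01, P10]
  module
open Matrix Kronecker

theorem hMred (x l Θ Φ : ℝ) : rhoMred x l Θ Φ
    = (1/16:ℂ) • ((Ebu x l Θ Φ 1 * Ebu x l Θ Φ 1 + Ebu x l Θ Φ (-1) * Ebu x l Θ Φ (-1))
        ⊗ₖ (1:Matrix (Fin 2) (Fin 2) ℂ)) := by
  have h1 := hEPE x l Θ Φ 1
  have h2 := hEPE x l Θ Φ (-1)
  ext ⟨m1, m2⟩ ⟨n1, n2⟩
  have e1 : (Ebu x l Θ Φ 1 * ket0bra0 * Ebu x l Θ Φ 1) m1 n1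
      + (Ebu x l Θ Φ 1 * ket1bra1 * Ebu x l Θ Φ 1) m1 n1
      = (Ebu x l Θ Φ 1 * Ebu x l Θ Φ 1) m1 n1 := by
    rw [← Matrix.add_apply, h1]
  have e2 : (Ebu x l Θ Φ (-1) * ket0bra0 * Ebu x l Θ Φ (-1)) m1 n1
      + (Ebu x l Θ Φ (-1) * ket1bra1 * Ebu x l Θ Φ (-1)) m1 n1
      = (Ebu x l Θ Φ (-1) * Ebu x l Θ Φ (-1)) m1 n1 := by
    rw [← Matrix.add_apply, h2]
  simp only [ket0bra0, ket1bra1] at e1 e2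
  simp only [rhoMred, Matrix.of_apply, hSM, Fin.sum_univ_two, Matrix.add_apply,
    Matrix.smul_apply, Matrix.kroneckerMap_apply, Matrix.one_apply, smul_eq_mul,
    ket0bra0, ket1bra1, Matrix.cons_val', Matrix.cons_val_zero, Matrix.cons_val_one,
    Matrix.head_cons, Matrix.empty_val', Matrix.cons_val_fin_one, Matrix.head_fin_const]
  by_cases hmn : m2 = n2 <;> simp [hmn] <;> linear_combination (1/16:ℂ) * e1 + (1/16:ℂ) * e2

theorem hS (x l Θ Φ : ℝ) :
    Ebu x l Θ Φ 1 * Ebu x l Θ Φ 1 + Ebu x l Θ Φ (-1) * Ebu x l Θ Φ (-1)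
      = (((1 + x^2 + l^2)/2 : ℝ) : ℂ) • (1:Matrix (Fin 2) (Fin 2) ℂ)
        + ((x*l : ℝ) : ℂ) • Qobs Θ Φ := by
  rw [hE x l Θ Φ 1, hE x l Θ Φ (-1)]
  simp only [Matrix.add_mul, Matrix.mul_add, Matrix.smul_mul, Matrix.mul_smul,
    Matrix.one_mul, Matrix.mul_one, hQ2, smul_smul]
  push_cast
  module

theorem htrQ (Θ Φ : ℝ) : (Qobs Θ Φ).trace = 0 := by
  simp [Matrix.trace, Qobs, Fin.sum_univ_two, Matrix.diag]

theorem htr (x l Θ Φ : ℝ) : (rhoSM x l Θ Φ).trace = (((1 + x^2 + l^2)/8 : ℝ) : ℂ) := by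
  have hc : (rhoSM x l Θ Φ).trace = (rhoMred x l Θ Φ).trace := by
    rw [Matrix.trace, Matrix.trace]
    simp only [Matrix.diag, rhoMred, Matrix.of_apply, Fintype.sum_prod_type]
    rw [Finset.sum_comm]
    exact Finset.sum_congr rfl fun y _ => Finset.sum_comm
  rw [hc, hMred, hS, Matrix.trace_smul, Matrix.trace_kronecker, Matrix.trace_add,
    Matrix.trace_smul, Matrix.trace_smul, htrQ, Matrix.trace_one]
  simp only [smul_eq_mul]
  push_cast [Fintype.card_fin]
  ring
open Matrix Kronecker

theorem hmain (x l Θ Φ : ℝ) :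
    ((rhoSM x l Θ Φ).trace)⁻¹ • rhoMred x l Θ Φ
      = ((1/2 : ℂ) • (1 : Matrix (Fin 2) (Fin 2) ℂ)
          + ((x * l / (1 + x ^ 2 + l ^ 2) : ℝ) : ℂ) • Qobs Θ Φ) ⊗ₖ
        ((1/2 : ℂ) • (1 : Matrix (Fin 2) (Fin 2) ℂ)) := by
  have hpos : (0:ℝ) < 1 + x ^ 2 + l ^ 2 := by positivity
  have hne : ((1 + x ^ 2 + l ^ 2 : ℝ) : ℂ) ≠ 0 := by
    exact_mod_cast ne_of_gt hpos
  rw [htr, hMred, hS]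
  simp only [Matrix.add_kronecker, Matrix.smul_kronecker, Matrix.kronecker_smul,
    smul_smul, smul_add]
  have h32 : (32:ℂ) + (x:ℂ)^2*32 + (l:ℂ)^2*32 ≠ 0 := by
    have h : ((32 + x^2*32 + l^2*32:ℝ):ℂ) ≠ 0 := by
      exact_mod_cast ne_of_gt (by positivity)
    push_cast at h; convert h using 2 <;> ring
  have h16 : (16:ℂ) + (x:ℂ)^2*16 + (l:ℂ)^2*16 ≠ 0 := by
    have h : ((16 + x^2*16 + l^2*16:ℝ):ℂ) ≠ 0 := by
      exact_mod_cast ne_of_gt (by positivity)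
    push_cast at h; convert h using 2 <;> ring
  have h2 : (2:ℂ) + (x:ℂ)^2*2 + (l:ℂ)^2*2 ≠ 0 := by
    have h : ((2 + x^2*2 + l^2*2:ℝ):ℂ) ≠ 0 := by
      exact_mod_cast ne_of_gt (by positivity)
    push_cast at h; convert h using 2 <;> ring
  push_cast
  have hu : (1:ℂ) + (x:ℂ)^2 + (l:ℂ)^2 ≠ 0 := by push_cast at hne; convert hne using 1
  match_scalars
  · field_simp [hu]
    ring
  · field_simp [hu]
    ring
open Matrix Finset Function in
set_option maxHeartbeats 1000000 in
theorem det_fin_four' {R : Type*} [CommRing R] (A : Matrix (Fin 4) (Fin 4) R) :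
    A.det =
      A 0 0 * (A 1 1 * A 2 2 * A 3 3 - A 1 1 * A 2 3 * A 3 2 - A 1 2 * A 2 1 * A 3 3
        + A 1 2 * A 2 3 * A 3 1 + A 1 3 * A 2 1 * A 3 2 - A 1 3 * A 2 2 * A 3 1)
      - A 0 1 * (A 1 0 * A 2 2 * A 3 3 - A 1 0 * A 2 3 * A 3 2 - A 1 2 * A 2 0 * A 3 3
        + A 1 2 * A 2 3 * A 3 0 + A 1 3 * A 2 0 * A 3 2 - A 1 3 * A 2 2 * A 3 0)
      + A 0 2 * (A 1 0 * A 2 1 * A 3 3 - A 1 0 * A 2 3 * A 3 1 - A 1 1 * A 2 0 * A 3 3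
        + A 1 1 * A 2 3 * A 3 0 + A 1 3 * A 2 0 * A 3 1 - A 1 3 * A 2 1 * A 3 0)
      - A 0 3 * (A 1 0 * A 2 1 * A 3 2 - A 1 0 * A 2 2 * A 3 1 - A 1 1 * A 2 0 * A 3 2
        + A 1 1 * A 2 2 * A 3 0 + A 1 2 * A 2 0 * A 3 1 - A 1 2 * A 2 1 * A 3 0) := by
  rw [Matrix.det_succ_row_zero, Fin.sum_univ_four]
  simp [Matrix.det_fin_three, Fin.succAbove, Fin.lt_def, Matrix.submatrix_apply, show (Fin.succ 2 : Fin 4) = 3 from rfl, show ((3:Fin 4):ℕ) = 3 from rfl, show (Fin.castSucc 2 : Fin 4) = 2 from rfl]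
  ring
open Matrix Kronecker

def e4 : Fin 2 × Fin 2 ≃ Fin 4 where
  toFun p := ⟨p.1.val * 2 + p.2.val, by omega⟩
  invFun := ![(0,0), (0,1), (1,0), (1,1)]
  left_inv := by decide
  right_inv := by decide

set_option maxHeartbeats 2000000 in
open Polynomial in
theorem charpoly4 (M : Matrix (Fin 2) (Fin 2) ℂ) :
    (M ⊗ₖ ((1/2:ℂ) • (1:Matrix (Fin 2) (Fin 2) ℂ))).charpoly
      = (X^2 - C ((M 0 0 + M 1 1)/2) * X
          + C ((M 0 0 * M 1 1 - M 0 1 * M 1 0)/4))^2 := by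
  rw [← Matrix.charpoly_reindex e4]
  have hA : (Matrix.reindex e4 e4) (M ⊗ₖ ((1/2:ℂ) • (1:Matrix (Fin 2) (Fin 2) ℂ)))
      = !![M 0 0/2, 0, M 0 1/2, 0;
           0, M 0 0/2, 0, M 0 1/2;
           M 1 0/2, 0, M 1 1/2, 0;
           0, M 1 0/2, 0, M 1 1/2] := by
    ext i j
    fin_cases i <;> fin_cases j <;>
      simp [e4, Matrix.one_apply, Equiv.coe_fn_symm_mk] <;> ring
  rw [hA, Matrix.charpoly]
  have hcm : charmatrix !![M 0 0/2, 0, M 0 1/2, 0;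
           0, M 0 0/2, 0, M 0 1/2;
           M 1 0/2, 0, M 1 1/2, 0;
           0, M 1 0/2, 0, M 1 1/2]
      = !![X - C (M 0 0/2), 0, -C (M 0 1/2), 0;
           0, X - C (M 0 0/2), 0, -C (M 0 1/2);
           -C (M 1 0/2), 0, X - C (M 1 1/2), 0;
           0, -C (M 1 0/2), 0, X - C (M 1 1/2)] := by
    ext i j
    fin_cases i <;> fin_cases j <;>
      simp [charmatrix_apply_eq, charmatrix_apply_ne]
  rw [hcm, det_fin_four']
  simp
  have c2 : C ((M 0 0 + M 1 1)/2) = C (M 0 0/2) + C (M 1 1/2) := by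
    rw [← C_add]; congr 1; ring
  have c4 : C ((M 0 0 * M 1 1 - M 0 1 * M 1 0)/4)
      = C (M 0 0/2) * C (M 1 1/2) - C (M 0 1/2) * C (M 1 0/2) := by
    rw [← C_mul, ← C_mul, ← C_sub]; congr 1; ring
  rw [c2, c4]
  ring

open Polynomial in
/-- The normalized post-measurement reduced memory state is
`[(1/2)𝟙 + s·Q(Θ,Φ)] ⊗ (1/2)𝟙` with `s = xλ/(1+x²+λ²)`, and its eigenvalues are
`(1/4)(1+2s)` and `(1/4)(1−2s)`, each with multiplicity two, independently of `Θ, Φ`. -/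
theorem stmt15 (x l Θ Φ : ℝ) (hl : 0 ≤ l) :
    ((rhoSM x l Θ Φ).trace)⁻¹ • rhoMred x l Θ Φ
        = ((1/2 : ℂ) • (1 : Matrix (Fin 2) (Fin 2) ℂ)
            + ((x * l / (1 + x ^ 2 + l ^ 2) : ℝ) : ℂ) • Qobs Θ Φ) ⊗ₖ
          ((1/2 : ℂ) • (1 : Matrix (Fin 2) (Fin 2) ℂ)) ∧
    (((rhoSM x l Θ Φ).trace)⁻¹ • rhoMred x l Θ Φ).charpoly
        = (X - C (((1 + 2 * (x * l / (1 + x ^ 2 + l ^ 2)))/4 : ℝ) : ℂ)) ^ 2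
            * (X - C (((1 - 2 * (x * l / (1 + x ^ 2 + l ^ 2)))/4 : ℝ) : ℂ)) ^ 2 := by
  have h1 := hmain x l Θ Φ
  refine ⟨h1, ?_⟩
  rw [h1, charpoly4]
  set u : ℝ := x * l / (1 + x ^ 2 + l ^ 2) with hu
  set M : Matrix (Fin 2) (Fin 2) ℂ := (1/2 : ℂ) • 1 + ((u:ℝ):ℂ) • Qobs Θ Φ with hM
  have e00 : M 0 0 = 1/2 + (u:ℂ) * Complex.cos Θ := by
    simp [hM, Qobs, Matrix.one_apply]
  have e11 : M 1 1 = 1/2 - (u:ℂ) * Complex.cos Θ := by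
    simp [hM, Qobs, Matrix.one_apply]; ring
  have e01 : M 0 1 = (u:ℂ) * (Complex.exp (↑Φ * Complex.I) * Complex.sin Θ) := by
    simp [hM, Qobs, Matrix.one_apply]
  have e10 : M 1 0 = (u:ℂ) * (Complex.exp (-(↑Φ * Complex.I)) * Complex.sin Θ) := by
    simp [hM, Qobs, Matrix.one_apply, neg_mul]
  have hexp : Complex.exp (-(↑Φ * Complex.I)) * Complex.exp (↑Φ * Complex.I) = 1 := by
    rw [← Complex.exp_add]; ring_nf; exact Complex.exp_zero
  have htrig : Complex.cos Θ ^ 2 + Complex.sin Θ ^ 2 = 1 := Complex.cos_sq_add_sin_sq Θ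
  have hsum : (M 0 0 + M 1 1)/2 = (((1 + 2*u)/4 : ℝ):ℂ) + (((1 - 2*u)/4 : ℝ):ℂ) := by
    rw [e00, e11]; push_cast; ring
  have hprod : (M 0 0 * M 1 1 - M 0 1 * M 1 0)/4
      = (((1 + 2*u)/4 : ℝ):ℂ) * (((1 - 2*u)/4 : ℝ):ℂ) := by
    rw [e00, e11, e01, e10]; push_cast
    linear_combination (-(u:ℂ)^2 * Complex.sin Θ ^ 2/4) * hexp + (-(u:ℂ)^2/4) * htrig
  rw [hsum, hprod, C_add, C_mul]
  ring
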